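/- The unperturbed quantum walk operator U = S·(G ⊗ I) on the hypercube commutes with every bit-swap permutation operator P_{ij}, where P_{ij} simultaneously swaps bits i and j of the node label and swaps coin directions i and j. -/

import Mathlib

open Matrix Kronecker

/-- The hypercube shift operator `S|d,x⟩ = |d, x ⊕ e_d⟩`. -/
noncomputable def hypercubeShift (n : ℕ) :
    Matrix (Fin n × (Fin n → ZMod 2)) (Fin n × (Fin n → ZMod 2)) ℂ :=
  fun p q => if p.1 = q.1 ∧ p.2 = q.2 + Pi.single q.1 1 then 1 else 0

/-- The Grover diffusion coin `G = -I + 2|s⟩⟨s|` on `ℂ^n`. -/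
noncomputable def groverCoin (n : ℕ) : Matrix (Fin n) (Fin n) ℂ :=
  fun d e => (if d = e then -1 else 0) + 2 / (n : ℂ)

/-- The unperturbed walk operator `U = S · (G ⊗ I)`. -/
noncomputable def walkU (n : ℕ) :
    Matrix (Fin n × (Fin n → ZMod 2)) (Fin n × (Fin n → ZMod 2)) ℂ :=
  hypercubeShift n * (groverCoin n ⊗ₖ (1 : Matrix (Fin n → ZMod 2) (Fin n → ZMod 2) ℂ))

/-- The bit-swap operator `P_{ij}|d,x⟩ = |σ(d), x∘σ⟩` where `σ = (i j)`. -/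
noncomputable def bitSwap (n : ℕ) (i j : Fin n) :
    Matrix (Fin n × (Fin n → ZMod 2)) (Fin n × (Fin n → ZMod 2)) ℂ :=
  fun p q => if p.1 = Equiv.swap i j q.1 ∧ p.2 = q.2 ∘ Equiv.swap i j then 1 else 0

/-- The unperturbed hypercube walk commutes with every bit-swap `P_{ij}`. -/
theorem walkU_commutes_bitSwap (n : ℕ) (hn : 2 ≤ n) (i j : Fin n) :
    walkU n * bitSwap n i j = bitSwap n i j * walkU n := by
  have htwo : ∀ a : ZMod 2, a + a = 0 := by decide
  have hcancel : ∀ (x s : Fin n → ZMod 2), x + s + s = x := by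
    intro x s; funext k
    simp [add_assoc, htwo]
  -- entrywise formula for walkU
  have hU : ∀ p q, walkU n p q =
      if q.2 = p.2 + Pi.single p.1 1 then groverCoin n p.1 q.1 else 0 := by
    intro p q
    rw [walkU, Matrix.mul_apply]
    rw [Finset.sum_eq_single ((p.1, p.2 + Pi.single p.1 1) :
        Fin n × (Fin n → ZMod 2))]
    · simp [hypercubeShift, hcancel, Matrix.kroneckerMap_apply, Matrix.one_apply,
        eq_comm, mul_ite]
    · rintro ⟨r1, r2⟩ - hr
      by_cases h : p.1 = r1 ∧ p.2 = r2 + Pi.single r1 1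
      · exfalso; apply hr
        obtain ⟨h1, h2⟩ := h
        subst h1
        have : r2 = p.2 + Pi.single p.1 1 := by
          rw [h2, hcancel]
        simp [this]
      · simp [hypercubeShift, h]
    · intro h; exact absurd (Finset.mem_univ _) h
  have hswap : ∀ a, Equiv.swap i j (Equiv.swap i j a) = a := fun a =>
    Equiv.swap_apply_self i j a
  have hsingle : ∀ a : Fin n, (Pi.single a 1 : Fin n → ZMod 2) ∘ Equiv.swap i j
      = Pi.single (Equiv.swap i j a) 1 := by
    intro a; funext k
    simp only [Function.comp_apply, Pi.single_apply]
    congr 1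
    simp only [eq_iff_iff]
    constructor
    · intro h; rw [← h, hswap]
    · intro h; rw [h, hswap]
  ext p q
  rw [Matrix.mul_apply, Matrix.mul_apply]
  rw [Finset.sum_eq_single ((Equiv.swap i j q.1, q.2 ∘ Equiv.swap i j) :
      Fin n × (Fin n → ZMod 2))]
  rotate_left
  · rintro ⟨r1, r2⟩ - hr
    by_cases h : r1 = Equiv.swap i j q.1 ∧ r2 = q.2 ∘ Equiv.swap i j
    · exact absurd (Prod.ext h.1 h.2) hr
    · simp [bitSwap, h]
  · intro h; exact absurd (Finset.mem_univ _) h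
  rw [Finset.sum_eq_single ((Equiv.swap i j p.1, p.2 ∘ Equiv.swap i j) :
      Fin n × (Fin n → ZMod 2))]
  rotate_left
  · rintro ⟨r1, r2⟩ - hr
    by_cases h : p.1 = Equiv.swap i j r1 ∧ p.2 = r2 ∘ Equiv.swap i j
    · exfalso; apply hr
      obtain ⟨h1, h2⟩ := h
      have e1 : r1 = Equiv.swap i j p.1 := by rw [h1, hswap]
      have e2 : r2 = p.2 ∘ Equiv.swap i j := by
        funext k
        rw [h2]; simp [hswap]
      exact Prod.ext e1 e2
    · simp [bitSwap, h]
  · intro h; exact absurd (Finset.mem_univ _) h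
  have hb1 : bitSwap n i j (Equiv.swap i j q.1, q.2 ∘ Equiv.swap i j) q = 1 := by
    simp [bitSwap]
  have hb2 : bitSwap n i j p (Equiv.swap i j p.1, p.2 ∘ Equiv.swap i j) = 1 := by
    simp only [bitSwap]
    rw [if_pos]
    constructor
    · rw [hswap]
    · funext k; simp [hswap]
  rw [hb1, hb2, mul_one, one_mul, hU, hU]
  have hcond : (q.2 ∘ Equiv.swap i j = p.2 + Pi.single p.1 1) ↔
      (q.2 = p.2 ∘ Equiv.swap i j + Pi.single (Equiv.swap i j p.1) 1) := by
    constructor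
    · intro h
      funext k
      have := congrFun h (Equiv.swap i j k)
      simp only [Function.comp_apply, hswap] at this
      rw [this]
      simp [Pi.add_apply, Function.comp_apply, ← hsingle p.1]
    · intro h
      funext k
      rw [Function.comp_apply, congrFun h (Equiv.swap i j k)]
      simp only [Pi.add_apply, Function.comp_apply, ← hsingle p.1, hswap]
  have hG : groverCoin n p.1 (Equiv.swap i j q.1)
      = groverCoin n (Equiv.swap i j p.1) q.1 := by
    simp only [groverCoin]
    congr 1
    congr 1
    simp only [eq_iff_iff]
    constructor
    · intro h; rw [h, hswap]
    · intro h; rw [← h, hswap]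
  by_cases h : q.2 ∘ Equiv.swap i j = p.2 + Pi.single p.1 1
  · rw [if_pos h, if_pos (hcond.mp h), hG]
  · rw [if_neg h, if_neg (fun hc => h (hcond.mpr hc))]
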